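/- If G is a dead right end, then G is equivalent, modulo the closure of dead ends, to the canonical-form integer game n where n = l(G) is the left-length of G; symmetrically a dead left end is equivalent to -r(G). -/

import Mathlib

universe u

namespace SetTheory

/-- Pre-games, as formerly defined in Mathlib (`Mathlib.SetTheory.Game.PGame`). -/
inductive PGame : Type (u + 1)
  | mk : ∀ α β : Type u, (α → PGame) → (β → PGame) → PGame

namespace PGame

def LeftMoves : PGame → Type u
  | mk l _ _ _ => l

def RightMoves : PGame → Type u
  | mk _ r _ _ => r

def moveLeft : ∀ g : PGame, LeftMoves g → PGame
  | mk _l _ L _ => L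

def moveRight : ∀ g : PGame, RightMoves g → PGame
  | mk _ _r _ R => R

inductive IsOption : PGame → PGame → Prop
  | moveLeft {x : PGame} (i : x.LeftMoves) : IsOption (x.moveLeft i) x
  | moveRight {x : PGame} (i : x.RightMoves) : IsOption (x.moveRight i) x

instance : Zero PGame :=
  ⟨⟨PEmpty, PEmpty, PEmpty.elim, PEmpty.elim⟩⟩

def neg : PGame → PGame
  | ⟨l, r, L, R⟩ => ⟨r, l, fun i => neg (R i), fun i => neg (L i)⟩

instance : Neg PGame :=
  ⟨neg⟩

noncomputable instance : Add PGame.{u} :=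
  ⟨fun x y => by
    induction x generalizing y with | mk xl xr _ _ IHxl IHxr => _
    induction y with | mk yl yr yL yR IHyl IHyr => _
    have y := mk yl yr yL yR
    refine ⟨xl ⊕ yl, xr ⊕ yr, Sum.rec ?_ ?_, Sum.rec ?_ ?_⟩
    · exact fun i => IHxl i y
    · exact IHyl
    · exact fun i => IHxr i y
    · exact IHyr⟩

end PGame

end SetTheory

open SetTheory

namespace Misere

/-- `F` is a follower of `G`: reachable from `G` by a (possibly empty) sequence of moves. -/
def Follower (F G : PGame) : Prop := Relation.ReflTransGen PGame.IsOption F G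

def IsLeftEnd (G : PGame) : Prop := IsEmpty G.LeftMoves
def IsRightEnd (G : PGame) : Prop := IsEmpty G.RightMoves

/-- A dead left end: every follower (including itself) is a left end. -/
def DeadLeftEnd (G : PGame) : Prop := ∀ F, Follower F G → IsLeftEnd F
def DeadRightEnd (G : PGame) : Prop := ∀ F, Follower F G → IsRightEnd F
def DeadEnd (G : PGame) : Prop := DeadLeftEnd G ∨ DeadRightEnd G

/-- A game is dead-ending if every end follower is a dead end. -/
def DeadEnding (G : PGame) : Prop :=
  ∀ F, Follower F G → (IsLeftEnd F → DeadLeftEnd F) ∧ (IsRightEnd F → DeadRightEnd F)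

/-- The universe of dead-ending games. -/
def E : Set PGame := {G | DeadEnding G}

/-- `(misereWins G).1` : Left, moving first, wins `G` under misère play;
    `(misereWins G).2` : Right, moving first, wins `G` under misère play. -/
def misereWins : PGame → Prop × Prop
  | PGame.mk l r L R =>
      (IsEmpty l ∨ ∃ i, ¬ (misereWins (L i)).2,
       IsEmpty r ∨ ∃ j, ¬ (misereWins (R j)).1)

def LeftWinsGF (G : PGame) : Prop := (misereWins G).1
def RightWinsGF (G : PGame) : Prop := (misereWins G).2

inductive MOutcome : Type
  | L | N | P | R
deriving DecidableEq

/-- Partial order on misère outcomes: `R` minimal, `L` maximal, `N` and `P` incomparable. -/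
def MOutcome.le : MOutcome → MOutcome → Prop
  | .R, _ => True
  | _, .L => True
  | a, b => a = b

instance : LE MOutcome := ⟨MOutcome.le⟩

/-- The misère outcome of a game. -/
noncomputable def outcome (G : PGame) : MOutcome := by
  classical
  exact if LeftWinsGF G then (if RightWinsGF G then .N else .L)
        else (if RightWinsGF G then .R else .P)

/-- `G ≡ H (mod U)`. -/
def equivMod (U : Set PGame) (G H : PGame) : Prop :=
  ∀ X ∈ U, outcome (G + X) = outcome (H + X)

/-- `G ≧ H (mod U)`. -/
def geMod (U : Set PGame) (G H : PGame) : Prop :=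
  ∀ X ∈ U, outcome (H + X) ≤ outcome (G + X)

/-- `LeftChain G n`: there is a sequence of `n` consecutive Left moves from `G`
ending at the zero position. -/
inductive LeftChain : PGame → ℕ → Prop
  | zero (G : PGame) : IsLeftEnd G → IsRightEnd G → LeftChain G 0
  | succ (G : PGame) (i : G.LeftMoves) (n : ℕ) :
      LeftChain (G.moveLeft i) n → LeftChain G (n + 1)

inductive RightChain : PGame → ℕ → Prop
  | zero (G : PGame) : IsLeftEnd G → IsRightEnd G → RightChain G 0
  | succ (G : PGame) (j : G.RightMoves) (n : ℕ) :
      RightChain (G.moveRight j) n → RightChain G (n + 1)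

/-- Left-length: minimum number of consecutive Left moves needed to reach zero. -/
noncomputable def leftLength (G : PGame) : ℕ := sInf {n | LeftChain G n}

/-- Right-length: minimum number of consecutive Right moves needed to reach zero. -/
noncomputable def rightLength (G : PGame) : ℕ := sInf {n | RightChain G n}

/-- Normal-play canonical form of a nonnegative integer. -/
def natGame : ℕ → PGame
  | 0 => 0
  | n + 1 => PGame.mk PUnit PEmpty (fun _ => natGame n) PEmpty.elim

/-- Normal-play canonical form of an integer (negatives are conjugates). -/
def intGame (n : ℤ) : PGame :=
  if 0 ≤ n then natGame n.toNat else -natGame (-n).toNat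

/-- Normal-play canonical form of the dyadic rational `m / 2 ^ j`. -/
def dyadicGame : ℤ → ℕ → PGame
  | m, 0 => intGame m
  | m, j + 1 =>
      if m % 2 = 0 then dyadicGame (m / 2) j
      else PGame.mk PUnit PUnit (fun _ => dyadicGame ((m - 1) / 2) j)
            (fun _ => dyadicGame ((m + 1) / 2) j)

/-- The closure of dead ends: finite disjunctive sums of dead ends. -/
def DeadEndClosure : Set PGame :=
  {G | ∃ l : List PGame, (∀ x ∈ l, DeadEnd x) ∧ G = l.sum}

end Misere

namespace SetTheory
namespace PGame

@[elab_as_elim]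
noncomputable def moveRecOn {C : PGame → Sort*} (x : PGame)
    (IH : ∀ y : PGame, (∀ i, C (y.moveLeft i)) → (∀ j, C (y.moveRight j)) → C y) : C x :=
  x.recOn fun yl yr yL yR _ _ => IH (mk yl yr yL yR) (by assumption) (by assumption)

theorem leftMoves_add : ∀ x y : PGame, (x + y).LeftMoves = (x.LeftMoves ⊕ y.LeftMoves)
  | mk _ _ _ _, mk _ _ _ _ => rfl

theorem rightMoves_add : ∀ x y : PGame, (x + y).RightMoves = (x.RightMoves ⊕ y.RightMoves)
  | mk _ _ _ _, mk _ _ _ _ => rfl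

noncomputable def toLeftMovesAdd {x y : PGame} : x.LeftMoves ⊕ y.LeftMoves ≃ (x + y).LeftMoves :=
  Equiv.cast (leftMoves_add x y).symm

noncomputable def toRightMovesAdd {x y : PGame} : x.RightMoves ⊕ y.RightMoves ≃ (x + y).RightMoves :=
  Equiv.cast (rightMoves_add x y).symm

theorem add_moveLeft_inl {x : PGame} (y : PGame) (i) :
    (x + y).moveLeft (toLeftMovesAdd (Sum.inl i)) = x.moveLeft i + y := by
  cases x
  cases y
  rfl

theorem add_moveLeft_inr (x : PGame) {y : PGame} (i) :
    (x + y).moveLeft (toLeftMovesAdd (Sum.inr i)) = x + y.moveLeft i := by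
  cases x
  cases y
  rfl

theorem add_moveRight_inl {x : PGame} (y : PGame) (i) :
    (x + y).moveRight (toRightMovesAdd (Sum.inl i)) = x.moveRight i + y := by
  cases x
  cases y
  rfl

theorem add_moveRight_inr (x : PGame) {y : PGame} (i) :
    (x + y).moveRight (toRightMovesAdd (Sum.inr i)) = x + y.moveRight i := by
  cases x
  cases y
  rfl

theorem leftMoves_add_cases {x y : PGame} (k) {P : (x + y).LeftMoves → Prop}
    (hl : ∀ i, P (toLeftMovesAdd (Sum.inl i))) (hr : ∀ i, P (toLeftMovesAdd (Sum.inr i))) :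
    P k := by
  rw [← toLeftMovesAdd.apply_symm_apply k]
  rcases toLeftMovesAdd.symm k with i | i
  · exact hl i
  · exact hr i

theorem rightMoves_add_cases {x y : PGame} (k) {P : (x + y).RightMoves → Prop}
    (hl : ∀ i, P (toRightMovesAdd (Sum.inl i))) (hr : ∀ i, P (toRightMovesAdd (Sum.inr i))) :
    P k := by
  rw [← toRightMovesAdd.apply_symm_apply k]
  rcases toRightMovesAdd.symm k with i | i
  · exact hl i
  · exact hr i

theorem isEmpty_leftMoves_add (x y : PGame) [IsEmpty x.LeftMoves] [IsEmpty y.LeftMoves] :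
    IsEmpty (x + y).LeftMoves :=
  ⟨fun k => (toLeftMovesAdd.symm k).elim isEmptyElim isEmptyElim⟩

theorem isEmpty_rightMoves_add (x y : PGame) [IsEmpty x.RightMoves] [IsEmpty y.RightMoves] :
    IsEmpty (x + y).RightMoves :=
  ⟨fun k => (toRightMovesAdd.symm k).elim isEmptyElim isEmptyElim⟩

theorem neg_neg_aux : ∀ x : PGame, -(-x) = x
  | mk l r L R => by
    have h1 : (fun i => -(-(L i))) = L := funext fun i => neg_neg_aux (L i)
    have h2 : (fun j => -(-(R j))) = R := funext fun j => neg_neg_aux (R j)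
    show mk l r (fun i => -(-(L i))) (fun j => -(-(R j))) = mk l r L R
    rw [h1, h2]

theorem neg_zero_aux : -(0 : PGame) = 0 := by
  change neg 0 = 0
  show neg (mk _ _ _ _) = mk _ _ _ _
  simp only [neg]
  congr 1 <;> funext i <;> exact i.elim

instance : InvolutiveNeg PGame := { neg_neg := neg_neg_aux }

instance : NegZeroClass PGame := { neg_zero := neg_zero_aux }

theorem isOption_neg_neg_of {x y : PGame} (h : IsOption x y) : IsOption (-x) (-y) := by
  cases h with
  | moveLeft i =>
    cases y
    exact IsOption.moveRight (x := -(mk _ _ _ _)) i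
  | moveRight i =>
    cases y
    exact IsOption.moveLeft (x := -(mk _ _ _ _)) i

theorem isOption_neg_neg {x y : PGame} : IsOption (-x) (-y) ↔ IsOption x y := by
  refine ⟨fun h => ?_, isOption_neg_neg_of⟩
  have := isOption_neg_neg_of h
  rwa [neg_neg_aux, neg_neg_aux] at this

end PGame
end SetTheory

open Misere SetTheory PGame

namespace MisereAux

open Misere SetTheory PGame

open Classical in
noncomputable def lmin : PGame → ℕ
  | PGame.mk l _ L _ => if IsEmpty l then 0 else sInf (Set.range fun i => lmin (L i)) + 1

open Classical in
noncomputable def rmin : PGame → ℕ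
  | PGame.mk _ r _ R => if IsEmpty r then 0 else sInf (Set.range fun j => rmin (R j)) + 1

lemma lmin_of_isLeftEnd {G : PGame} (h : IsLeftEnd G) : lmin G = 0 := by
  cases G with
  | mk l r L R => simp only [lmin]; rw [if_pos (show IsEmpty l from h)]

lemma rmin_of_isRightEnd {G : PGame} (h : IsRightEnd G) : rmin G = 0 := by
  cases G with
  | mk l r L R => simp only [rmin]; rw [if_pos (show IsEmpty r from h)]

lemma lmin_of_not {G : PGame} (h : ¬ IsLeftEnd G) :
    lmin G = sInf (Set.range fun i => lmin (G.moveLeft i)) + 1 := by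
  cases G with
  | mk l r L R => simp only [lmin]; rw [if_neg (show ¬ IsEmpty l from h)]; rfl

lemma rmin_of_not {G : PGame} (h : ¬ IsRightEnd G) :
    rmin G = sInf (Set.range fun j => rmin (G.moveRight j)) + 1 := by
  cases G with
  | mk l r L R => simp only [rmin]; rw [if_neg (show ¬ IsEmpty r from h)]; rfl

lemma lmin_eq_zero_iff {G : PGame} : lmin G = 0 ↔ IsLeftEnd G := by
  constructor
  · intro h
    by_contra hne
    rw [lmin_of_not hne] at h
    omega
  · exact lmin_of_isLeftEnd

lemma rmin_eq_zero_iff {G : PGame} : rmin G = 0 ↔ IsRightEnd G := by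
  constructor
  · intro h
    by_contra hne
    rw [rmin_of_not hne] at h
    omega
  · exact rmin_of_isRightEnd

lemma lmin_le_moveLeft {G : PGame} (i : G.LeftMoves) :
    lmin G ≤ lmin (G.moveLeft i) + 1 := by
  have h : ¬ IsLeftEnd G := fun h => (h.false i).elim
  rw [lmin_of_not h]
  exact Nat.add_le_add_right (Nat.sInf_le (Set.mem_range_self i)) 1

lemma rmin_le_moveRight {G : PGame} (j : G.RightMoves) :
    rmin G ≤ rmin (G.moveRight j) + 1 := by
  have h : ¬ IsRightEnd G := fun h => (h.false j).elim
  rw [rmin_of_not h]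
  exact Nat.add_le_add_right (Nat.sInf_le (Set.mem_range_self j)) 1

lemma exists_moveLeft_lmin {G : PGame} (h : ¬ IsLeftEnd G) :
    ∃ i, lmin (G.moveLeft i) + 1 = lmin G := by
  haveI : Nonempty G.LeftMoves := not_isEmpty_iff.mp h
  rw [lmin_of_not h]
  obtain ⟨i, hi⟩ := Set.mem_range.mp (Nat.sInf_mem (Set.range_nonempty fun i => lmin (G.moveLeft i)))
  exact ⟨i, congrArg (· + 1) hi⟩

lemma exists_moveRight_rmin {G : PGame} (h : ¬ IsRightEnd G) :
    ∃ j, rmin (G.moveRight j) + 1 = rmin G := by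
  haveI : Nonempty G.RightMoves := not_isEmpty_iff.mp h
  rw [rmin_of_not h]
  obtain ⟨j, hj⟩ := Set.mem_range.mp (Nat.sInf_mem (Set.range_nonempty fun j => rmin (G.moveRight j)))
  exact ⟨j, congrArg (· + 1) hj⟩

lemma leftWinsGF_iff {G : PGame} :
    LeftWinsGF G ↔ IsLeftEnd G ∨ ∃ i, ¬ RightWinsGF (G.moveLeft i) := by
  cases G with
  | mk l r L R => exact Iff.rfl

lemma rightWinsGF_iff {G : PGame} :
    RightWinsGF G ↔ IsRightEnd G ∨ ∃ j, ¬ LeftWinsGF (G.moveRight j) := by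
  cases G with
  | mk l r L R => exact Iff.rfl

/-- The key invariance property: at every follower, Left's moves do not change
Right's distance to exhaustion, and vice versa. -/
def Good (G : PGame) : Prop :=
  ∀ F, Follower F G →
    (∀ i, rmin (F.moveLeft i) = rmin F) ∧ (∀ j, lmin (F.moveRight j) = lmin F)

theorem main : ∀ G : PGame, Good G →
    (LeftWinsGF G ↔ lmin G ≤ rmin G) ∧ (RightWinsGF G ↔ rmin G ≤ lmin G) := by
  intro G
  induction G using PGame.moveRecOn with
  | _ G ihl ihr =>
    intro h
    have hG := h G .refl
    have goodL : ∀ i, Good (G.moveLeft i) := fun i F hF =>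
      h F (hF.trans (Relation.ReflTransGen.single (PGame.IsOption.moveLeft i)))
    have goodR : ∀ j, Good (G.moveRight j) := fun j F hF =>
      h F (hF.trans (Relation.ReflTransGen.single (PGame.IsOption.moveRight j)))
    constructor
    · rw [leftWinsGF_iff]
      constructor
      · rintro (he | ⟨i, hi⟩)
        · rw [lmin_of_isLeftEnd he]; exact Nat.zero_le _
        · rw [(ihl i (goodL i)).2] at hi
          have h1 : lmin (G.moveLeft i) < rmin (G.moveLeft i) := Nat.lt_of_not_le hi
          have h2 := lmin_le_moveLeft i
          have h3 := hG.1 i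
          omega
      · intro hab
        by_cases he : IsLeftEnd G
        · exact Or.inl he
        · obtain ⟨i, hi⟩ := exists_moveLeft_lmin he
          refine Or.inr ⟨i, ?_⟩
          rw [(ihl i (goodL i)).2]
          have h3 := hG.1 i
          omega
    · rw [rightWinsGF_iff]
      constructor
      · rintro (he | ⟨j, hj⟩)
        · rw [rmin_of_isRightEnd he]; exact Nat.zero_le _
        · rw [(ihr j (goodR j)).1] at hj
          have h1 : rmin (G.moveRight j) < lmin (G.moveRight j) := Nat.lt_of_not_le hj
          have h2 := rmin_le_moveRight j
          have h3 := hG.2 j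
          omega
      · intro hab
        by_cases he : IsRightEnd G
        · exact Or.inl he
        · obtain ⟨j, hj⟩ := exists_moveRight_rmin he
          refine Or.inr ⟨j, ?_⟩
          rw [(ihr j (goodR j)).1]
          have h3 := hG.2 j
          omega

lemma not_isLeftEnd_add_left {x : PGame} (h : ¬ IsLeftEnd x) (y : PGame) :
    ¬ IsLeftEnd (x + y) := by
  haveI : Nonempty x.LeftMoves := not_isEmpty_iff.mp h
  exact not_isEmpty_iff.mpr ⟨toLeftMovesAdd (Sum.inl (Classical.arbitrary _))⟩

lemma not_isLeftEnd_add_right (x : PGame) {y : PGame} (h : ¬ IsLeftEnd y) :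
    ¬ IsLeftEnd (x + y) := by
  haveI : Nonempty y.LeftMoves := not_isEmpty_iff.mp h
  exact not_isEmpty_iff.mpr ⟨toLeftMovesAdd (Sum.inr (Classical.arbitrary _))⟩

lemma not_isRightEnd_add_left {x : PGame} (h : ¬ IsRightEnd x) (y : PGame) :
    ¬ IsRightEnd (x + y) := by
  haveI : Nonempty x.RightMoves := not_isEmpty_iff.mp h
  exact not_isEmpty_iff.mpr ⟨toRightMovesAdd (Sum.inl (Classical.arbitrary _))⟩

lemma not_isRightEnd_add_right (x : PGame) {y : PGame} (h : ¬ IsRightEnd y) :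
    ¬ IsRightEnd (x + y) := by
  haveI : Nonempty y.RightMoves := not_isEmpty_iff.mp h
  exact not_isEmpty_iff.mpr ⟨toRightMovesAdd (Sum.inr (Classical.arbitrary _))⟩

theorem lmin_add (x : PGame) : ∀ y : PGame, lmin (x + y) = lmin x + lmin y := by
  induction x using PGame.moveRecOn with
  | _ x ihx _ =>
    intro y
    induction y using PGame.moveRecOn with
    | _ y ihy _ =>
      by_cases hx : IsLeftEnd x <;> by_cases hy : IsLeftEnd y
      · haveI : IsEmpty x.LeftMoves := hx; haveI : IsEmpty y.LeftMoves := hy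
        have hxy : IsLeftEnd (x + y) := PGame.isEmpty_leftMoves_add x y
        rw [lmin_of_isLeftEnd hxy, lmin_of_isLeftEnd hx, lmin_of_isLeftEnd hy]
      all_goals {
        first
        | (have hxy : ¬ IsLeftEnd (x + y) := not_isLeftEnd_add_right x hy)
        | (have hxy : ¬ IsLeftEnd (x + y) := not_isLeftEnd_add_left hx y)
        have hub : ∀ k : (x + y).LeftMoves, lmin x + lmin y ≤ lmin ((x + y).moveLeft k) + 1 := by
          intro k
          refine PGame.leftMoves_add_cases (P := fun k => lmin x + lmin y ≤ lmin ((x + y).moveLeft k) + 1) k (fun i => ?_) (fun j => ?_)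
          · show lmin x + lmin y ≤ lmin ((x + y).moveLeft (toLeftMovesAdd (Sum.inl i))) + 1
            rw [PGame.add_moveLeft_inl, ihx i y]
            have := lmin_le_moveLeft (G := x) i
            omega
          · show lmin x + lmin y ≤ lmin ((x + y).moveLeft (toLeftMovesAdd (Sum.inr j))) + 1
            rw [PGame.add_moveLeft_inr, ihy j]
            have := lmin_le_moveLeft (G := y) j
            omega
        have h1 : lmin x + lmin y ≤ lmin (x + y) := by
          obtain ⟨k, hk⟩ := exists_moveLeft_lmin hxy
          rw [← hk]; exact hub k
        have h2 : lmin (x + y) ≤ lmin x + lmin y := by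
          by_cases hx' : IsLeftEnd x
          · have hy' : ¬ IsLeftEnd y := by
              intro hc
              first | exact hy hc | exact hx hx'
            obtain ⟨j, hj⟩ := exists_moveLeft_lmin hy'
            have := lmin_le_moveLeft (G := x + y) (toLeftMovesAdd (Sum.inr j))
            rw [PGame.add_moveLeft_inr, ihy j] at this
            omega
          · obtain ⟨i, hi⟩ := exists_moveLeft_lmin hx'
            have := lmin_le_moveLeft (G := x + y) (toLeftMovesAdd (Sum.inl i))
            rw [PGame.add_moveLeft_inl, ihx i y] at this
            omega
        omega }

theorem rmin_add (x : PGame) : ∀ y : PGame, rmin (x + y) = rmin x + rmin y := by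
  induction x using PGame.moveRecOn with
  | _ x _ ihx =>
    intro y
    induction y using PGame.moveRecOn with
    | _ y _ ihy =>
      by_cases hx : IsRightEnd x <;> by_cases hy : IsRightEnd y
      · haveI : IsEmpty x.RightMoves := hx; haveI : IsEmpty y.RightMoves := hy
        have hxy : IsRightEnd (x + y) := PGame.isEmpty_rightMoves_add x y
        rw [rmin_of_isRightEnd hxy, rmin_of_isRightEnd hx, rmin_of_isRightEnd hy]
      all_goals {
        first
        | (have hxy : ¬ IsRightEnd (x + y) := not_isRightEnd_add_right x hy)
        | (have hxy : ¬ IsRightEnd (x + y) := not_isRightEnd_add_left hx y)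
        have hub : ∀ k : (x + y).RightMoves, rmin x + rmin y ≤ rmin ((x + y).moveRight k) + 1 := by
          intro k
          refine PGame.rightMoves_add_cases (P := fun k => rmin x + rmin y ≤ rmin ((x + y).moveRight k) + 1) k (fun i => ?_) (fun j => ?_)
          · show rmin x + rmin y ≤ rmin ((x + y).moveRight (toRightMovesAdd (Sum.inl i))) + 1
            rw [PGame.add_moveRight_inl, ihx i y]
            have := rmin_le_moveRight (G := x) i
            omega
          · show rmin x + rmin y ≤ rmin ((x + y).moveRight (toRightMovesAdd (Sum.inr j))) + 1
            rw [PGame.add_moveRight_inr, ihy j]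
            have := rmin_le_moveRight (G := y) j
            omega
        have h1 : rmin x + rmin y ≤ rmin (x + y) := by
          obtain ⟨k, hk⟩ := exists_moveRight_rmin hxy
          rw [← hk]; exact hub k
        have h2 : rmin (x + y) ≤ rmin x + rmin y := by
          by_cases hx' : IsRightEnd x
          · have hy' : ¬ IsRightEnd y := by
              intro hc
              first | exact hy hc | exact hx hx'
            obtain ⟨j, hj⟩ := exists_moveRight_rmin hy'
            have := rmin_le_moveRight (G := x + y) (toRightMovesAdd (Sum.inr j))
            rw [PGame.add_moveRight_inr, ihy j] at this
            omega
          · obtain ⟨i, hi⟩ := exists_moveRight_rmin hx'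
            have := rmin_le_moveRight (G := x + y) (toRightMovesAdd (Sum.inl i))
            rw [PGame.add_moveRight_inl, ihx i y] at this
            omega
        omega }

lemma isOption_add {F x X : PGame} (h : PGame.IsOption F (x + X)) :
    (∃ x', PGame.IsOption x' x ∧ F = x' + X) ∨ (∃ X', PGame.IsOption X' X ∧ F = x + X') := by
  cases h with
  | moveLeft i =>
    obtain ⟨k, rfl⟩ : ∃ k, toLeftMovesAdd k = i :=
      ⟨toLeftMovesAdd.symm i, Equiv.apply_symm_apply _ i⟩
    cases k with
    | inl j => exact Or.inl ⟨x.moveLeft j, PGame.IsOption.moveLeft j, PGame.add_moveLeft_inl X j⟩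
    | inr j => exact Or.inr ⟨X.moveLeft j, PGame.IsOption.moveLeft j, PGame.add_moveLeft_inr x j⟩
  | moveRight i =>
    obtain ⟨k, rfl⟩ : ∃ k, toRightMovesAdd k = i :=
      ⟨toRightMovesAdd.symm i, Equiv.apply_symm_apply _ i⟩
    cases k with
    | inl j => exact Or.inl ⟨x.moveRight j, PGame.IsOption.moveRight j, PGame.add_moveRight_inl X j⟩
    | inr j => exact Or.inr ⟨X.moveRight j, PGame.IsOption.moveRight j, PGame.add_moveRight_inr x j⟩

lemma follower_add {x X F : PGame} (h : Follower F (x + X)) :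
    ∃ x' X', Follower x' x ∧ Follower X' X ∧ F = x' + X' := by
  induction h using Relation.ReflTransGen.head_induction_on with
  | refl => exact ⟨x, X, .refl, .refl, rfl⟩
  | head hstep h ih =>
    obtain ⟨x', X', hx', hX', rfl⟩ := ih
    rcases isOption_add hstep with ⟨x'', h'', rfl⟩ | ⟨X'', h'', rfl⟩
    · exact ⟨x'', X', Relation.ReflTransGen.head h'' hx', hX', rfl⟩
    · exact ⟨x', X'', hx', Relation.ReflTransGen.head h'' hX', rfl⟩

lemma deadRightEnd_follower {G F : PGame} (h : DeadRightEnd G) (hF : Follower F G) :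
    DeadRightEnd F := fun F' h' => h F' (h'.trans hF)

lemma deadLeftEnd_follower {G F : PGame} (h : DeadLeftEnd G) (hF : Follower F G) :
    DeadLeftEnd F := fun F' h' => h F' (h'.trans hF)

lemma good_zero : Good 0 := by
  intro F hF
  have hF0 : F = 0 := by
    rcases hF.cases_tail with h | ⟨c, hc, hcb⟩
    · exact h.symm
    · cases hcb with
      | moveLeft i => exact PEmpty.elim i
      | moveRight j => exact PEmpty.elim j
  subst hF0
  exact ⟨fun i => PEmpty.elim i, fun j => PEmpty.elim j⟩

lemma good_add {x X : PGame} (hx : DeadEnd x) (hX : Good X) : Good (x + X) := by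
  intro F hF
  obtain ⟨x', X', hx', hX', rfl⟩ := follower_add hF
  have hXg := hX X' hX'
  constructor
  · intro k
    refine PGame.leftMoves_add_cases
      (P := fun k => rmin ((x' + X').moveLeft k) = rmin (x' + X')) k (fun i => ?_) (fun j => ?_)
    · show rmin ((x' + X').moveLeft (toLeftMovesAdd (Sum.inl i))) = _
      rw [PGame.add_moveLeft_inl, rmin_add, rmin_add]
      rcases hx with hL | hR
      · exact (((deadLeftEnd_follower hL hx') x' .refl).false i).elim
      · have h1 : rmin x' = 0 := rmin_of_isRightEnd (hR x' hx')
        have h2 : rmin (x'.moveLeft i) = 0 :=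
          rmin_of_isRightEnd (hR _ (Relation.ReflTransGen.head (PGame.IsOption.moveLeft i) hx'))
        rw [h1, h2]
    · show rmin ((x' + X').moveLeft (toLeftMovesAdd (Sum.inr j))) = _
      rw [PGame.add_moveLeft_inr, rmin_add, rmin_add, hXg.1 j]
  · intro k
    refine PGame.rightMoves_add_cases
      (P := fun k => lmin ((x' + X').moveRight k) = lmin (x' + X')) k (fun i => ?_) (fun j => ?_)
    · show lmin ((x' + X').moveRight (toRightMovesAdd (Sum.inl i))) = _
      rw [PGame.add_moveRight_inl, lmin_add, lmin_add]
      rcases hx with hL | hR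
      · have h1 : lmin x' = 0 := lmin_of_isLeftEnd (hL x' hx')
        have h2 : lmin (x'.moveRight i) = 0 :=
          lmin_of_isLeftEnd (hL _ (Relation.ReflTransGen.head (PGame.IsOption.moveRight i) hx'))
        rw [h1, h2]
      · exact ((hR x' hx').false i).elim
    · show lmin ((x' + X').moveRight (toRightMovesAdd (Sum.inr j))) = _
      rw [PGame.add_moveRight_inr, lmin_add, lmin_add, hXg.2 j]

lemma good_sum (l : List PGame) (hl : ∀ x ∈ l, DeadEnd x) : Good l.sum := by
  induction l with
  | nil => exact good_zero
  | cons a t ih =>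
    rw [List.sum_cons]
    exact good_add (hl a (List.mem_cons_self)) (ih fun x hx => hl x (List.mem_cons_of_mem a hx))

lemma outcome_congr {G H : PGame} (h1 : LeftWinsGF G ↔ LeftWinsGF H)
    (h2 : RightWinsGF G ↔ RightWinsGF H) : outcome G = outcome H := by
  unfold outcome
  rw [show LeftWinsGF G = LeftWinsGF H from propext h1,
      show RightWinsGF G = RightWinsGF H from propext h2]

lemma main_outcome {G H X : PGame} (hG : DeadEnd G) (hH : DeadEnd H) (hX : Good X)
    (h1 : lmin G = lmin H) (h2 : rmin G = rmin H) :
    outcome (G + X) = outcome (H + X) := by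
  have g1 := main _ (good_add hG hX)
  have g2 := main _ (good_add hH hX)
  refine outcome_congr ?_ ?_
  · rw [g1.1, g2.1, lmin_add, lmin_add, rmin_add, rmin_add, h1, h2]
  · rw [g1.2, g2.2, lmin_add, lmin_add, rmin_add, rmin_add, h1, h2]

lemma isOption_natGame {F : PGame} {n : ℕ} (h : PGame.IsOption F (natGame (n + 1))) :
    F = natGame n := by
  cases h with
  | moveLeft i => rfl
  | moveRight j => exact PEmpty.elim j

lemma deadRightEnd_natGame (n : ℕ) : DeadRightEnd (natGame n) := by
  induction n with
  | zero =>
    intro F hF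
    rcases hF.cases_tail with h | ⟨c, hc, hcb⟩
    · rw [← h]; exact PEmpty.instIsEmpty
    · cases hcb with
      | moveLeft i => exact PEmpty.elim i
      | moveRight j => exact PEmpty.elim j
  | succ n ih =>
    intro F hF
    rcases hF.cases_tail with h | ⟨c, hc, hcb⟩
    · rw [← h]; exact PEmpty.instIsEmpty
    · have hc' := isOption_natGame hcb
      subst hc'
      exact ih F hc

lemma lmin_natGame (n : ℕ) : lmin (natGame n) = n := by
  induction n with
  | zero => exact lmin_of_isLeftEnd PEmpty.instIsEmpty
  | succ n ih =>
    have hne : ¬ IsLeftEnd (natGame (n + 1)) := fun h => (h.false PUnit.unit).elim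
    obtain ⟨i, hi⟩ := exists_moveLeft_lmin hne
    have h2 : (natGame (n + 1)).moveLeft i = natGame n := rfl
    rw [h2, ih] at hi
    exact hi.symm

lemma rmin_natGame (n : ℕ) : rmin (natGame n) = 0 :=
  rmin_of_isRightEnd (deadRightEnd_natGame n _ .refl)

lemma follower_neg {F G : PGame} (h : Follower F G) : Follower (-F) (-G) :=
  Relation.ReflTransGen.lift (fun z => -z) (fun _ _ hab => PGame.isOption_neg_neg.mpr hab) _ _ h

lemma deadLeftEnd_neg {G : PGame} (h : DeadRightEnd G) : DeadLeftEnd (-G) := by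
  intro F hF
  have h2 : Follower (-F) G := by
    have := follower_neg hF
    rwa [neg_neg] at this
  have h3 : IsRightEnd (-F) := h _ h2
  cases F with
  | mk l r L R => exact h3

lemma lmin_rmin_neg : ∀ G : PGame, lmin (-G) = rmin G ∧ rmin (-G) = lmin G := by
  intro G
  induction G with
  | mk l r L R ihL ihR =>
    constructor
    · by_cases h : IsEmpty r
      · rw [lmin_of_isLeftEnd (show IsLeftEnd (-PGame.mk l r L R) from h),
          rmin_of_isRightEnd (show IsRightEnd (PGame.mk l r L R) from h)]
      · rw [lmin_of_not (show ¬ IsLeftEnd (-PGame.mk l r L R) from h),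
          rmin_of_not (show ¬ IsRightEnd (PGame.mk l r L R) from h)]
        have he : (fun j : r => lmin ((-PGame.mk l r L R).moveLeft j))
            = fun j : r => rmin ((PGame.mk l r L R).moveRight j) := funext fun j => (ihR j).1
        exact congrArg (fun s => sInf s + 1) (congrArg Set.range he)
    · by_cases h : IsEmpty l
      · rw [rmin_of_isRightEnd (show IsRightEnd (-PGame.mk l r L R) from h),
          lmin_of_isLeftEnd (show IsLeftEnd (PGame.mk l r L R) from h)]
      · rw [rmin_of_not (show ¬ IsRightEnd (-PGame.mk l r L R) from h),
          lmin_of_not (show ¬ IsLeftEnd (PGame.mk l r L R) from h)]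
        have he : (fun i : l => rmin ((-PGame.mk l r L R).moveRight i))
            = fun i : l => lmin ((PGame.mk l r L R).moveLeft i) := funext fun i => (ihL i).2
        exact congrArg (fun s => sInf s + 1) (congrArg Set.range he)

lemma lmin_neg_natGame (n : ℕ) : lmin (-natGame n) = 0 := by
  rw [(lmin_rmin_neg _).1, rmin_natGame]

lemma rmin_neg_natGame (n : ℕ) : rmin (-natGame n) = n := by
  rw [(lmin_rmin_neg _).2, lmin_natGame]

lemma intGame_natCast (n : ℕ) : intGame (n : ℤ) = natGame n := by
  rw [intGame, if_pos (Int.natCast_nonneg n), Int.toNat_natCast]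

lemma intGame_neg_natCast (n : ℕ) : intGame (-(n : ℤ)) = -natGame n := by
  rcases Nat.eq_zero_or_pos n with rfl | hn
  · show intGame (-(0:ℤ)) = -natGame 0
    rw [neg_zero, intGame, if_pos le_rfl]
    show natGame 0 = -natGame 0
    show (0 : PGame) = -(0 : PGame)
    exact neg_zero.symm
  · have h0 : (0:ℤ) < (n:ℤ) := by exact_mod_cast hn
    rw [intGame, if_neg (by omega), neg_neg, Int.toNat_natCast]

lemma leftChain_lmin_le {G : PGame} {n : ℕ} (h : LeftChain G n) : lmin G ≤ n := by
  induction h with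
  | zero G h1 h2 => rw [lmin_of_isLeftEnd h1]
  | succ G i n hc ih => have := lmin_le_moveLeft i; omega

lemma rightChain_rmin_le {G : PGame} {n : ℕ} (h : RightChain G n) : rmin G ≤ n := by
  induction h with
  | zero G h1 h2 => rw [rmin_of_isRightEnd h2]
  | succ G j n hc ih => have := rmin_le_moveRight j; omega

lemma leftChain_lmin : ∀ {G : PGame}, DeadRightEnd G → LeftChain G (lmin G) := by
  intro G
  induction G using PGame.moveRecOn with
  | _ G ihl _ =>
    intro hG
    by_cases h : IsLeftEnd G
    · rw [lmin_of_isLeftEnd h]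
      exact LeftChain.zero G h (hG G .refl)
    · obtain ⟨i, hi⟩ := exists_moveLeft_lmin h
      rw [← hi]
      exact LeftChain.succ G i _
        (ihl i (deadRightEnd_follower hG (Relation.ReflTransGen.single (PGame.IsOption.moveLeft i))))

lemma rightChain_rmin : ∀ {G : PGame}, DeadLeftEnd G → RightChain G (rmin G) := by
  intro G
  induction G using PGame.moveRecOn with
  | _ G _ ihr =>
    intro hG
    by_cases h : IsRightEnd G
    · rw [rmin_of_isRightEnd h]
      exact RightChain.zero G (hG G .refl) h
    · obtain ⟨j, hj⟩ := exists_moveRight_rmin h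
      rw [← hj]
      exact RightChain.succ G j _
        (ihr j (deadLeftEnd_follower hG (Relation.ReflTransGen.single (PGame.IsOption.moveRight j))))

lemma leftLength_eq {G : PGame} (hG : DeadRightEnd G) : leftLength G = lmin G :=
  le_antisymm (Nat.sInf_le (leftChain_lmin hG))
    (le_csInf ⟨_, leftChain_lmin hG⟩ fun _ hn => leftChain_lmin_le hn)

lemma rightLength_eq {G : PGame} (hG : DeadLeftEnd G) : rightLength G = rmin G :=
  le_antisymm (Nat.sInf_le (rightChain_rmin hG))
    (le_csInf ⟨_, rightChain_rmin hG⟩ fun _ hn => rightChain_rmin_le hn)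

end MisereAux

/-- modulo the closure of dead ends, every dead end is equivalent to an integer. -/
theorem stmt9 (G : PGame) :
    (DeadRightEnd G → equivMod DeadEndClosure G (intGame (leftLength G))) ∧
    (DeadLeftEnd G → equivMod DeadEndClosure G (intGame (-(rightLength G : ℤ)))) := by
  constructor
  · intro hG X hX
    obtain ⟨l, hl, rfl⟩ := hX
    have goodX : MisereAux.Good l.sum := MisereAux.good_sum l hl
    rw [MisereAux.intGame_natCast]
    refine MisereAux.main_outcome (Or.inr hG) (Or.inr (MisereAux.deadRightEnd_natGame _)) goodX ?_ ?_
    · rw [MisereAux.lmin_natGame, MisereAux.leftLength_eq hG]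
    · rw [MisereAux.rmin_natGame, MisereAux.rmin_of_isRightEnd (hG G .refl)]
  · intro hG X hX
    obtain ⟨l, hl, rfl⟩ := hX
    have goodX : MisereAux.Good l.sum := MisereAux.good_sum l hl
    rw [MisereAux.intGame_neg_natCast]
    refine MisereAux.main_outcome (Or.inl hG)
      (Or.inl (MisereAux.deadLeftEnd_neg (MisereAux.deadRightEnd_natGame _))) goodX ?_ ?_
    · rw [MisereAux.lmin_neg_natGame, MisereAux.lmin_of_isLeftEnd (hG G .refl)]
    · rw [MisereAux.rmin_neg_natGame, MisereAux.rightLength_eq hG]
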